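/- The automorphisms ρ_i, ϑ_i of the free group F_n (n ≥ 3) do NOT satisfy the relation ϑ_{i+1}ρ_iρ_{i+1} = ϑ_iρ_{i+1}ρ_i: for n = 3 and i = 1, the compositions ϑ_2∘ρ_1∘ρ_2 and ϑ_1∘ρ_2∘ρ_1 differ on a generator of F_3. -/

import Mathlib

/-- The Artin endomorphism `ρ_i` of the free group `F_n`:
`x_i ↦ x_i x_{i+1} x_i⁻¹`, `x_{i+1} ↦ x_i`, fixing other generators. -/
def artinRho (n i : ℕ) (h : i + 1 < n) : FreeGroup (Fin n) →* FreeGroup (Fin n) :=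
  FreeGroup.lift fun j =>
    if j.val = i then
      FreeGroup.of ⟨i, Nat.lt_of_succ_lt h⟩ * FreeGroup.of ⟨i + 1, h⟩ *
        (FreeGroup.of ⟨i, Nat.lt_of_succ_lt h⟩)⁻¹
    else if j.val = i + 1 then FreeGroup.of ⟨i, Nat.lt_of_succ_lt h⟩
    else FreeGroup.of j

/-- The permutation endomorphism `ϑ_i` of `F_n`: swaps `x_i` and `x_{i+1}`. -/
def permTheta (n i : ℕ) (h : i + 1 < n) : FreeGroup (Fin n) →* FreeGroup (Fin n) :=
  FreeGroup.lift fun j =>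
    if j.val = i then FreeGroup.of ⟨i + 1, h⟩
    else if j.val = i + 1 then FreeGroup.of ⟨i, Nat.lt_of_succ_lt h⟩
    else FreeGroup.of j

/-- In `F_3` the second 'forbidden relation' fails: `ϑ_2 ρ_1 ρ_2 ≠ ϑ_1 ρ_2 ρ_1`
(1-indexed; here 0-indexed). The two compositions differ on some generator. -/
theorem forbidden_relation_fails_aut :
    ∃ k : Fin 3,
      (permTheta 3 1 (by omega)).comp
          ((artinRho 3 0 (by omega)).comp (artinRho 3 1 (by omega)))
          (FreeGroup.of k) ≠
        (permTheta 3 0 (by omega)).comp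
          ((artinRho 3 1 (by omega)).comp (artinRho 3 0 (by omega)))
          (FreeGroup.of k) := by
  use 0
  intro h
  have h2 := congrArg (FreeGroup.lift (fun j : Fin 3 =>
    if j.val = 0 then (1 : Equiv.Perm (Fin 3))
    else if j.val = 1 then Equiv.swap 1 2 else Equiv.swap 0 1)) h
  simp only [MonoidHom.comp_apply, artinRho, permTheta, FreeGroup.lift_apply_of,
    map_mul, map_inv, Fin.val_zero, Fin.isValue] at h2
  simp only [if_pos, if_neg, Fin.ext_iff, Fin.val_zero, Fin.val_one, Fin.val_two] at h2
  norm_num [FreeGroup.lift_apply_of] at h2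
  revert h2
  decide
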